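/- Let (p_n) be a sequence in (0,1) with p_n → 0, and consider the randomly oriented complete binary tree T_n of height n with parameter p_n. Then, as n → ∞, E[|C_n|]/(2^n·p_n) → 1 and E[|C↓_n|]/(2^n·p_n) → 1; in particular E[|C_n|] ∼ E[|C↓_n|] ∼ 2^n·p_n. -/

import Mathlib

open MeasureTheory ProbabilityTheory Finset
open scoped Classical

/-- Vertices of the complete binary tree of height `n`: words over `{0,1}`
of length at most `n`.  The empty word is the root; words of length `n`
are the leaves; the level of `v` is `n - |v|`. -/
def Vtx (n : ℕ) : Type := {l : List Bool // l.length ≤ n}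

/-- Edges of the complete binary tree of height `n`, indexed by the nonempty
words of length at most `n`: the edge joins such a word to its predecessor
(the word obtained by deleting the last letter). -/
def Edg (n : ℕ) : Type := {l : List Bool // l ≠ [] ∧ l.length ≤ n}

noncomputable instance (n : ℕ) : Fintype (Vtx n) := by
  apply Fintype.ofInjective (fun v : Vtx n => fun i : Fin (n + 1) => v.1[i.1]?)
  intro u v h
  apply Subtype.ext
  apply List.ext_getElem?
  intro m
  by_cases hm : m < n + 1
  · exact congrFun h ⟨m, hm⟩
  · have hu := u.2
    have hv := v.2
    rw [List.getElem?_eq_none_iff.2, List.getElem?_eq_none_iff.2] <;> omega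

noncomputable instance (n : ℕ) : Fintype (Edg n) := by
  apply Fintype.ofInjective (fun v : Edg n => fun i : Fin (n + 1) => v.1[i.1]?)
  intro u v h
  apply Subtype.ext
  apply List.ext_getElem?
  intro m
  by_cases hm : m < n + 1
  · exact congrFun h ⟨m, hm⟩
  · have hu := u.2.2
    have hv := v.2.2
    rw [List.getElem?_eq_none_iff.2, List.getElem?_eq_none_iff.2] <;> omega

/-- The Bernoulli measure on `Bool`: `true` has probability `p`,
`false` has probability `1 - p`. -/
noncomputable def bern (p : ℝ) : Measure Bool :=
  (ENNReal.ofReal p) • Measure.dirac true + (ENNReal.ofReal (1 - p)) • Measure.dirac false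

instance (p : ℝ) : IsFiniteMeasure (bern p) := by
  constructor
  simp only [bern, Measure.add_apply, Measure.smul_apply, smul_eq_mul]
  exact ENNReal.add_lt_top.mpr
    ⟨ENNReal.mul_lt_top ENNReal.ofReal_lt_top (by simp),
     ENNReal.mul_lt_top ENNReal.ofReal_lt_top (by simp)⟩

/-- The random orientation measure on the complete binary tree of height `n`:
each edge is oriented towards the root (coordinate `true`) with probability `p`,
independently of the other edges. -/
noncomputable def treeMeasure (n : ℕ) (p : ℝ) : Measure (Edg n → Bool) :=
  Measure.pi fun _ => bern p

/-- One oriented step in the configuration `ω`: `a → b` if the tree edge between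
`a` and `b` is oriented from `a` to `b` (coordinate `true` means oriented towards
the root, i.e. towards the shorter word). -/
def TStep {n : ℕ} (ω : Edg n → Bool) (a b : Vtx n) : Prop :=
  ∃ e : Edg n, (ω e = true ∧ e.1 = a.1 ∧ b.1 = e.1.dropLast) ∨
    (ω e = false ∧ e.1 = b.1 ∧ a.1 = e.1.dropLast)

/-- `X v`: the event that water, pumped into the leaves, reaches `v`, i.e. there is
a directed path from some leaf to `v`. -/
def Xwet {n : ℕ} (v : Vtx n) : Set (Edg n → Bool) :=
  {ω | ∃ w : Vtx n, w.1.length = n ∧ Relation.ReflTransGen (TStep ω) w v}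

/-- `Y v`: the event that `v` gets wet in downwards percolation: there is a leaf `w`
above `v` such that every edge on the path from `w` down to `v` is oriented
towards the root. -/
def Ydown {n : ℕ} (v : Vtx n) : Set (Edg n → Bool) :=
  {ω | ∃ w : List Bool, w.length = n ∧ v.1 <+: w ∧
    ∀ u : Edg n, u.1 <+: w → v.1.length < u.1.length → ω u = true}

/-- The recursion `ρ₀ = 1`, `ρ_{k+1} = 2 p ρ_k - (p ρ_k)²`. -/
noncomputable def rho (p : ℝ) : ℕ → ℝ
  | 0 => 1
  | k + 1 => 2 * p * rho p k - (p * rho p k) ^ 2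

/-- `α^{(n)}_k`, the probability that water reaches a level-`k` vertex from below. -/
noncomputable def alpha (p : ℝ) (n k : ℕ) : ℝ :=
  (1 - p) * p * ∑ i ∈ Finset.range (n - k),
    (1 - p) ^ i * rho p (k + i) * ∏ j ∈ Finset.range i, (1 - p * rho p (k + j))

/-- The size of the percolation cluster `C_n` (leaves excluded). -/
noncomputable def clusterSize (n : ℕ) (ω : Edg n → Bool) : ℕ :=
  Nat.card {v : Vtx n // v.1.length < n ∧ ω ∈ Xwet v}

/-- The size of the downwards percolation cluster `C↓_n` (leaves excluded). -/
noncomputable def downClusterSize (n : ℕ) (ω : Edg n → Bool) : ℕ :=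
  Nat.card {v : Vtx n // v.1.length < n ∧ ω ∈ Ydown v}

/-- The maximum level reached by water in downwards percolation. -/
noncomputable def maxLevel (n : ℕ) (ω : Edg n → Bool) : ℕ :=
  sSup ({0} ∪ {k | ∃ v : Vtx n, ω ∈ Ydown v ∧ n - v.1.length = k})

/-- The root of the tree. -/
def root (n : ℕ) : Vtx n := ⟨[], by simp⟩


section Basics

variable {n : ℕ} {p : ℝ}

lemma bern_true (hp0 : 0 ≤ p) : bern p {true} = ENNReal.ofReal p := by
  simp [bern, Measure.dirac_apply]

lemma bern_false : bern p {false} = ENNReal.ofReal (1 - p) := by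
  simp [bern, Measure.dirac_apply]

lemma bern_prob (hp0 : 0 ≤ p) (hp1 : p ≤ 1) : IsProbabilityMeasure (bern p) := by
  constructor
  simp only [bern, Measure.add_apply, Measure.smul_apply, smul_eq_mul, measure_univ, mul_one]
  rw [← ENNReal.ofReal_add hp0 (by linarith)]
  norm_num

lemma treeMeasure_prob (n : ℕ) (hp0 : 0 ≤ p) (hp1 : p ≤ 1) :
    IsProbabilityMeasure (treeMeasure n p) := by
  haveI := bern_prob hp0 hp1
  unfold treeMeasure
  infer_instance

instance : Finite (Edg n) := Finite.of_fintype _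
instance : Finite (Vtx n) := Finite.of_fintype _

lemma measurableSet_all (s : Set (Edg n → Bool)) : MeasurableSet s := by
  haveI : MeasurableSingletonClass (Edg n → Bool) := by
    constructor
    intro f
    have h : {f} = ⋂ e, (fun ω : Edg n → Bool => ω e) ⁻¹' {f e} := by
      ext g; simp [funext_iff, Set.mem_iInter, eq_comm]
    rw [h]
    exact MeasurableSet.iInter fun e => measurable_pi_apply e (measurableSet_singleton _)
  exact (Set.to_countable s).measurableSet

/-- Cylinder set probability. -/
lemma measure_forall_eq (hp0 : 0 ≤ p) (hp1 : p ≤ 1) (cond : Edg n → Prop) [DecidablePred cond] (b : Bool) :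
    treeMeasure n p {ω | ∀ e, cond e → ω e = b}
      = (bern p {b}) ^ (Finset.univ.filter cond).card := by
  have hset : {ω : Edg n → Bool | ∀ e, cond e → ω e = b}
      = Set.pi Set.univ (fun e => if cond e then ({b} : Set Bool) else Set.univ) := by
    ext ω
    simp only [Set.mem_setOf_eq, Set.mem_pi, Set.mem_univ, forall_true_left]
    constructor
    · intro h e
      by_cases hc : cond e
      · simp [hc, h e hc]
      · simp [hc]
    · intro h e hc
      have := h e
      simpa [hc] using this
  haveI := bern_prob hp0 hp1
  rw [hset, treeMeasure, Measure.pi_pi]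
  simp only [apply_ite (bern p), measure_univ]
  rw [Finset.prod_ite, Finset.prod_const, Finset.prod_const]
  simp

end Basics

section Lists

variable {n : ℕ}

lemma prefix_eq_of_length {l a b : List Bool} (ha : a <+: l) (hb : b <+: l)
    (h : a.length = b.length) : a = b := by
  rw [List.prefix_iff_eq_take.mp ha, List.prefix_iff_eq_take.mp hb, h]

lemma prefix_dropLast {l e : List Bool} (h : e <+: l) (hlen : e.length < l.length) :
    e <+: l.dropLast := by
  rw [List.dropLast_eq_take, List.prefix_take_iff]
  exact ⟨h, by omega⟩

/-- Structural decomposition of directed reachability in an oriented tree: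
if `v` is reachable from `a`, there is a common ancestor `u` such that all
edges from `a` down to `u` point down (`true`) and all edges from `v` down to
`u` point up (`false`). -/
lemma reach_struct {ω : Edg n → Bool} {a v : Vtx n}
    (h : Relation.ReflTransGen (TStep ω) a v) :
    ∃ u : Vtx n, u.1 <+: a.1 ∧ u.1 <+: v.1 ∧
      (∀ e : Edg n, e.1 <+: a.1 → u.1.length < e.1.length → ω e = true) ∧
      (∀ e : Edg n, e.1 <+: v.1 → u.1.length < e.1.length → ω e = false) := by
  induction h with
  | refl =>
    exact ⟨a, List.prefix_refl _, List.prefix_refl _,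
      fun e he hl => absurd he.length_le (by omega),
      fun e he hl => absurd he.length_le (by omega)⟩
  | tail hab step ih =>
    rename_i b c
    obtain ⟨u, hua, hub, hup, hdown⟩ := ih
    obtain ⟨e, he⟩ := step
    rcases he with ⟨hωe, heb, hc⟩ | ⟨hωe, hec, hb⟩
    · -- step down: c = dropLast b, edge e = b is true
      have hub' : u.1 = b.1 := by
        by_contra hne
        have hlt : u.1.length < b.1.length := by
          have := hub.length_le
          rcases lt_or_eq_of_le this with h' | h'
          · exact h'
          · exact absurd (prefix_eq_of_length hub (List.prefix_refl _) h') hne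
        have := hdown e (heb ▸ List.prefix_refl _) (by rw [heb]; exact hlt)
        simp [hωe] at this
      refine ⟨c, ?_, List.prefix_refl _, ?_, ?_⟩
      · calc c.1 <+: b.1 := by rw [hc, heb]; exact List.dropLast_prefix _
          _ = u.1 := hub'.symm
          _ <+: a.1 := hua
      · intro e' he' hl
        have hcb : c.1.length = b.1.length - 1 := by
          rw [hc, heb, List.length_dropLast]
        have hbpos : 0 < b.1.length := by
          rw [← heb]; exact List.length_pos_iff.mpr e.2.1
        by_cases hlb : u.1.length < e'.1.length
        · exact hup e' he' hlb
        · -- e'.length = b.length, so e' = e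
          have : e'.1.length = b.1.length := by
            rw [hub'] at hlb; omega
          have heq : e'.1 = e.1 := by
            rw [heb]
            exact prefix_eq_of_length he' (hub' ▸ hua) (by rw [this, ← hub'])
          have : e' = e := Subtype.ext heq
          rw [this, hωe]
      · intro e' he' hl
        exact absurd he'.length_le (by omega)
    · -- step up: b = dropLast c, edge e = c is false
      have hbc : b.1 <+: c.1 := by rw [hb, hec]; exact List.dropLast_prefix _
      have hcne : c.1 ≠ [] := hec ▸ e.2.1
      have hblen : b.1.length = c.1.length - 1 := by rw [hb, hec, List.length_dropLast]
      refine ⟨u, hua, hub.trans hbc, hup, ?_⟩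
      intro e' he' hl
      by_cases hfull : e'.1.length = c.1.length
      · have : e'.1 = e.1 := by
          rw [hec]; exact prefix_eq_of_length he' (List.prefix_refl _) hfull
        rw [Subtype.ext this, hωe]
      · have hlt : e'.1.length < c.1.length := lt_of_le_of_ne he'.length_le hfull
        have : e'.1 <+: b.1 := by
          rw [hb, hec]
          exact prefix_dropLast (hec ▸ he') (hec ▸ hlt)
        exact hdown e' this hl

/-- Downwards percolation implies percolation. -/
lemma Ydown_subset_Xwet (v : Vtx n) : Ydown v ⊆ Xwet v := by
  intro ω hω
  obtain ⟨w, hwlen, hvw, hall⟩ := hω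
  have key : ∀ k, ∀ x : Vtx n, x.1 <+: w → v.1.length + k = x.1.length →
      Relation.ReflTransGen (TStep ω) x v := by
    intro k
    induction k with
    | zero =>
      intro x hx hlen
      have : x.1 = v.1 := prefix_eq_of_length hx hvw (by omega)
      rw [Subtype.ext this]
    | succ k ih =>
      intro x hx hlen
      have hxne : x.1 ≠ [] := by
        intro h
        rw [h] at hlen
        simp at hlen
      have hxn : x.1.length ≤ n := x.2
      set e : Edg n := ⟨x.1, hxne, hxn⟩ with he
      have hωe : ω e = true := hall e hx (by show v.1.length < x.1.length; omega)
      have hdl : x.1.dropLast.length ≤ n := by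
        rw [List.length_dropLast]; omega
      set x' : Vtx n := ⟨x.1.dropLast, hdl⟩ with hx'
      have hstep : TStep ω x x' := ⟨e, Or.inl ⟨hωe, rfl, rfl⟩⟩
      have hx'w : x'.1 <+: w := (List.dropLast_prefix _).trans hx
      have hx'len : v.1.length + k = x'.1.length := by
        have h1 : x'.1.length = x.1.length - 1 := List.length_dropLast
        omega
      exact Relation.ReflTransGen.head hstep (ih x' hx'w hx'len)
  refine ⟨⟨w, le_of_eq hwlen⟩, hwlen, ?_⟩
  have h3 := hvw.length_le
  exact key (n - v.1.length) _ (List.prefix_refl w) (by rw [hwlen] at h3; show _ = w.length; omega)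

end Lists

section Counting

variable {n : ℕ}

lemma card_length_eq {L : ℕ} (hL : L ≤ n) :
    (Finset.univ.filter (fun v : Vtx n => v.1.length = L)).card = 2 ^ L := by
  rw [← Fintype.card_subtype]
  have e : {v : Vtx n // v.1.length = L} ≃ List.Vector Bool L :=
    { toFun := fun v => ⟨v.1.1, v.2⟩
      invFun := fun x => ⟨⟨x.1, by rw [x.2]; exact hL⟩, x.2⟩
      left_inv := fun v => Subtype.ext (Subtype.ext rfl)
      right_inv := fun x => rfl }
  rw [Fintype.card_congr e, card_vector]
  simp

lemma card_leaves_le (u : List Bool) :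
    (Finset.univ.filter (fun w : Vtx n => w.1.length = n ∧ u <+: w.1)).card
      ≤ 2 ^ (n - u.length) := by
  rw [← Fintype.card_subtype]
  have h := Fintype.card_le_of_injective
    (fun w : {w : Vtx n // w.1.length = n ∧ u <+: w.1} =>
      (fun i : Fin (n - u.length) => w.1.1.getD (u.length + i.1) false))
    (by
      intro w w' h
      apply Subtype.ext; apply Subtype.ext
      have h2 : w.1.1.take u.length = u := (List.prefix_iff_eq_take.mp w.2.2).symm
      have h2' : w'.1.1.take u.length = u := (List.prefix_iff_eq_take.mp w'.2.2).symm
      have hdrop : w.1.1.drop u.length = w'.1.1.drop u.length := by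
        apply List.ext_getElem
        · rw [List.length_drop, List.length_drop, w.2.1, w'.2.1]
        · intro i h1 h2
          have hi : i < n - u.length := by
            rw [List.length_drop, w.2.1] at h1; exact h1
          have hfun := congrFun h ⟨i, hi⟩
          simp only [] at hfun
          rw [List.getElem_drop, List.getElem_drop]
          have e1 : w.1.1.getD (u.length + i) false = w.1.1[u.length + i] := by
            apply List.getD_eq_getElem
          have e2 : w'.1.1.getD (u.length + i) false = w'.1.1[u.length + i] := by
            apply List.getD_eq_getElem
          rw [← e1, ← e2]
          exact hfun
      calc w.1.1 = w.1.1.take u.length ++ w.1.1.drop u.length :=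
            (List.take_append_drop _ _).symm
        _ = w'.1.1.take u.length ++ w'.1.1.drop u.length := by rw [hdrop, h2, h2']
        _ = w'.1.1 := List.take_append_drop _ _)
  simpa using h

lemma sum_prefixes {M : Type*} [AddCommMonoid M] (v : Vtx n) (g : ℕ → M) :
    ∑ u ∈ Finset.univ.filter (fun u : Vtx n => u.1 <+: v.1), g u.1.length
      = ∑ j ∈ Finset.range (v.1.length + 1), g j := by
  have hjle : ∀ j : ℕ, (v.1.take j).length ≤ n :=
    fun j => le_trans (by rw [List.length_take]; exact min_le_right _ _) v.2
  refine Finset.sum_bij' (i := fun (u : Vtx n) (_ : u ∈ _) => u.1.length)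
    (j := fun (j : ℕ) (_ : j ∈ _) => (⟨v.1.take j, hjle j⟩ : Vtx n))
    ?_ ?_ ?_ ?_ ?_
  · intro u hu
    simp only [Finset.mem_filter, Finset.mem_univ, true_and] at hu
    simp only [Finset.mem_range]
    exact Nat.lt_succ_of_le hu.length_le
  · intro j hj
    refine Finset.mem_filter.mpr ⟨Finset.mem_univ _, ?_⟩
    exact List.take_prefix _ _
  · intro u hu
    simp only [Finset.mem_filter, Finset.mem_univ, true_and] at hu
    exact Subtype.ext (List.prefix_iff_eq_take.mp hu).symm
  · intro j hj
    simp only [Finset.mem_range] at hj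
    show (v.1.take j).length = j
    rw [List.length_take]
    omega
  · intro u hu
    rfl

lemma card_path_edges_ge (w : List Bool) (hw : w.length = n) (m : ℕ) :
    n - m ≤ (Finset.univ.filter (fun e : Edg n => e.1 <+: w ∧ m < e.1.length)).card := by
  rw [← Fintype.card_subtype]
  have hlen : ∀ j : Fin (n - m), (w.take (m + 1 + j.1)).length = m + 1 + j.1 := by
    intro j
    rw [List.length_take]
    have := j.2
    omega
  let f : Fin (n - m) → {e : Edg n // e.1 <+: w ∧ m < e.1.length} := fun j =>
    ⟨⟨w.take (m + 1 + j.1),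
      ⟨by intro hnil; have := hlen j; rw [hnil] at this; simp at this; omega,
       by rw [hlen j]; have := j.2; omega⟩⟩,
      List.take_prefix _ _,
      by rw [hlen j]; omega⟩
  have hinj : Function.Injective f := by
    intro j j' h
    have h2 := congrArg (fun x => x.1.1.length) h
    simp only [f] at h2
    rw [hlen j, hlen j'] at h2
    exact Fin.ext (by omega)
  simpa using Fintype.card_le_of_injective f hinj

end Counting

section IntegralCount

variable {n : ℕ} {p : ℝ}

lemma integral_count (hp0 : 0 ≤ p) (hp1 : p ≤ 1) (E : Vtx n → Set (Edg n → Bool)) :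
    ∫ ω, (Nat.card {v : Vtx n // v.1.length < n ∧ ω ∈ E v} : ℝ) ∂(treeMeasure n p)
      = ∑ v ∈ Finset.univ.filter (fun v : Vtx n => v.1.length < n),
          ((treeMeasure n p) (E v)).toReal := by
  haveI := treeMeasure_prob n hp0 hp1
  have hcount : ∀ ω : Edg n → Bool,
      (Nat.card {v : Vtx n // v.1.length < n ∧ ω ∈ E v} : ℝ)
        = ∑ v ∈ (Finset.univ : Finset (Vtx n)),
            (if v.1.length < n then Set.indicator (E v) (fun _ => (1:ℝ)) ω else 0) := by
    intro ω
    rw [Nat.card_eq_fintype_card, Fintype.card_subtype, Finset.card_filter]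
    push_cast
    apply Finset.sum_congr rfl
    intro v _
    by_cases hv : v.1.length < n
    · by_cases hω : ω ∈ E v
      · simp [hv, hω, Set.indicator_of_mem]
      · simp [hv, hω, Set.indicator_of_notMem]
    · simp [hv]
  simp_rw [hcount]
  rw [integral_finset_sum]
  · rw [Finset.sum_filter]
    apply Finset.sum_congr rfl
    intro v _
    by_cases hv : v.1.length < n
    · simp only [hv, if_true]
      rw [integral_indicator_const (1 : ℝ) (measurableSet_all _)]
      simp
      rfl
    · simp [hv]
  · intro v _
    by_cases hv : v.1.length < n
    · simp only [hv, if_true]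
      exact (integrable_const (1 : ℝ)).indicator (measurableSet_all _)
    · simp only [hv, if_false]
      exact integrable_zero _ _ _

end IntegralCount

section MeasureBounds

variable {n : ℕ} {p : ℝ}

lemma measure_Ydown_ge (hp0 : 0 ≤ p) (hp1 : p ≤ 1) (v : Vtx n) (hv : v.1.length + 1 = n) :
    p * (2 - p) ≤ ((treeMeasure n p) (Ydown v)).toReal := by
  haveI := treeMeasure_prob n hp0 hp1
  have hlen : ∀ b : Bool, (v.1 ++ [b]).length = n := by
    intro b; rw [List.length_append]; simpa using hv
  set e0 : Edg n := ⟨v.1 ++ [false], by simp, le_of_eq (hlen false)⟩ with he0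
  set e1 : Edg n := ⟨v.1 ++ [true], by simp, le_of_eq (hlen true)⟩ with he1
  set A : Set (Edg n → Bool) := {ω | ∀ e : Edg n, (e = e0 ∨ e = e1) → ω e = false} with hA
  have hsub : Aᶜ ⊆ Ydown v := by
    intro ω hω
    simp only [hA, Set.mem_compl_iff, Set.mem_setOf_eq, not_forall] at hω
    obtain ⟨e, he, hωe⟩ := hω
    have hωe' : ω e = true := by
      cases h : ω e
      · exact absurd h hωe
      · rfl
    have hepre : v.1 <+: e.1 ∧ e.1.length = n := by
      rcases he with rfl | rfl
      · exact ⟨⟨[false], rfl⟩, hlen false⟩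
      · exact ⟨⟨[true], rfl⟩, hlen true⟩
    refine ⟨e.1, hepre.2, hepre.1, ?_⟩
    intro u hu hul
    have hun : u.1.length = e.1.length := by
      have := hu.length_le
      rw [hepre.2] at this ⊢
      omega
    have : u = e := Subtype.ext (prefix_eq_of_length hu (List.prefix_refl _) hun)
    rw [this, hωe']
  have hne : e0 ≠ e1 := by
    intro h
    have h2 := congrArg Subtype.val h
    simp only [he0, he1] at h2
    simp at h2
  have hAmeas : (treeMeasure n p) A = ENNReal.ofReal (1 - p) ^ 2 := by
    rw [hA, measure_forall_eq hp0 hp1 (fun e => e = e0 ∨ e = e1) false, bern_false]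
    congr 1
    rw [Finset.card_eq_two]
    exact ⟨e0, e1, hne, by ext e; simp⟩
  have hcompl : (treeMeasure n p) Aᶜ = 1 - ENNReal.ofReal (1 - p) ^ 2 := by
    rw [measure_compl (measurableSet_all _) (measure_ne_top _ _), hAmeas, measure_univ]
  have h1 : ((treeMeasure n p) Aᶜ).toReal ≤ ((treeMeasure n p) (Ydown v)).toReal :=
    ENNReal.toReal_mono (measure_ne_top _ _) (measure_mono hsub)
  refine le_trans (le_of_eq ?_) h1
  rw [hcompl, ENNReal.toReal_sub_of_le
    (pow_le_one' (ENNReal.ofReal_le_one.mpr (by linarith)) 2) (by simp)]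
  rw [ENNReal.toReal_one, ← ENNReal.ofReal_pow (by linarith), ENNReal.toReal_ofReal (by positivity)]
  ring

lemma measure_Xwet_le (hp0 : 0 ≤ p) (hp1 : p ≤ 1) (v : Vtx n) :
    ((treeMeasure n p) (Xwet v)).toReal
      ≤ ∑ j ∈ Finset.range (v.1.length + 1), (2 * p) ^ (n - j) := by
  haveI := treeMeasure_prob n hp0 hp1
  set S : Finset (Vtx n × Vtx n) := Finset.univ.filter
    (fun q : Vtx n × Vtx n => q.1.1 <+: v.1 ∧ q.2.1.length = n ∧ q.1.1 <+: q.2.1) with hS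
  set E : Vtx n × Vtx n → Set (Edg n → Bool) := fun q =>
    {ω | ∀ e : Edg n, (e.1 <+: q.2.1 ∧ q.1.1.length < e.1.length) → ω e = true} with hE
  have hsub : Xwet v ⊆ ⋃ q ∈ S, E q := by
    intro ω hω
    obtain ⟨w, hwlen, hreach⟩ := hω
    obtain ⟨u, hua, huv, hup, _⟩ := reach_struct hreach
    refine Set.mem_biUnion (show (u, w) ∈ S from ?_) ?_
    · simp only [hS, Finset.mem_filter, Finset.mem_univ, true_and]
      exact ⟨huv, hwlen, hua⟩
    · intro e he
      exact hup e he.1 he.2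
  have hmeas : ∀ q ∈ S, ((treeMeasure n p) (E q)).toReal ≤ p ^ (n - q.1.1.length) := by
    intro q hq
    simp only [hS, Finset.mem_filter, Finset.mem_univ, true_and] at hq
    have : (treeMeasure n p) (E q)
        = ENNReal.ofReal p ^ (Finset.univ.filter
            (fun e : Edg n => e.1 <+: q.2.1 ∧ q.1.1.length < e.1.length)).card := by
      rw [hE]
      rw [measure_forall_eq hp0 hp1 _ true, bern_true hp0]
    rw [this, ← ENNReal.ofReal_pow hp0, ENNReal.toReal_ofReal (by positivity)]
    exact pow_le_pow_of_le_one hp0 hp1 (card_path_edges_ge q.2.1 hq.2.1 q.1.1.length)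
  have hchain : ((treeMeasure n p) (Xwet v)).toReal ≤ ∑ q ∈ S, p ^ (n - q.1.1.length) := by
    have h1 : (treeMeasure n p) (Xwet v) ≤ ∑ q ∈ S, (treeMeasure n p) (E q) :=
      (measure_mono hsub).trans (measure_biUnion_finset_le S E)
    have h2 : ((treeMeasure n p) (Xwet v)).toReal
        ≤ (∑ q ∈ S, (treeMeasure n p) (E q)).toReal :=
      ENNReal.toReal_mono
        ((ENNReal.sum_lt_top.mpr (fun q _ => measure_lt_top _ _)).ne) h1
    refine h2.trans ?_
    rw [ENNReal.toReal_sum (fun q _ => measure_ne_top _ _)]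
    exact Finset.sum_le_sum hmeas
  refine hchain.trans ?_
  have hgroup : ∑ q ∈ S, (p : ℝ) ^ (n - q.1.1.length)
      ≤ ∑ u ∈ Finset.univ.filter (fun u : Vtx n => u.1 <+: v.1), (2 * p) ^ (n - u.1.length) := by
    rw [hS, Finset.sum_filter, Fintype.sum_prod_type, Finset.sum_filter]
    apply Finset.sum_le_sum
    intro u _
    by_cases hu : u.1 <+: v.1
    · simp only [hu, true_and, if_true]
      have : ∑ w ∈ (Finset.univ : Finset (Vtx n)),
          (if w.1.length = n ∧ u.1 <+: w.1 then (p:ℝ) ^ (n - u.1.length) else 0)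
          = ((Finset.univ.filter (fun w : Vtx n => w.1.length = n ∧ u.1 <+: w.1)).card : ℝ)
              * p ^ (n - u.1.length) := by
        rw [← Finset.sum_filter, Finset.sum_const, nsmul_eq_mul]
      rw [this]
      have hcard := card_leaves_le (n := n) u.1
      calc ((Finset.univ.filter (fun w : Vtx n => w.1.length = n ∧ u.1 <+: w.1)).card : ℝ)
              * p ^ (n - u.1.length)
          ≤ (2:ℝ) ^ (n - u.1.length) * p ^ (n - u.1.length) := by
            apply mul_le_mul_of_nonneg_right _ (by positivity)
            calc ((Finset.univ.filter
                (fun w : Vtx n => w.1.length = n ∧ u.1 <+: w.1)).card : ℝ)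
                ≤ ((2 ^ (n - u.1.length) : ℕ) : ℝ) := by exact_mod_cast hcard
              _ = (2:ℝ) ^ (n - u.1.length) := by push_cast; ring
        _ = (2 * p) ^ (n - u.1.length) := by rw [mul_pow]
    · simp only [hu, false_and, if_false]
      simp
  refine hgroup.trans (le_of_eq ?_)
  exact sum_prefixes v (fun j => (2 * p) ^ (n - j))

end MeasureBounds

section Algebra

lemma geom_bound {q : ℝ} (hq0 : 0 ≤ q) (hq : q ≤ 1/2) (k : ℕ) :
    ∑ i ∈ Finset.range k, q ^ i ≤ 1 + 2 * q := by
  induction k with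
  | zero => simp; linarith
  | succ k ih =>
    rw [geom_sum_succ]
    have hnn : (0:ℝ) ≤ ∑ i ∈ Finset.range k, q ^ i :=
      Finset.sum_nonneg fun i _ => pow_nonneg hq0 i
    nlinarith

lemma inner_bound {p : ℝ} (hp0 : 0 ≤ p) (hp4 : p ≤ 1/4) {L n : ℕ} (hL : L < n) :
    ∑ j ∈ Finset.range (L + 1), (2*p) ^ (n - j) ≤ (1 + 4*p) * (2*p) ^ (n - L) := by
  have h1 : ∑ j ∈ Finset.range (L + 1), (2*p) ^ (n - j)
      = ∑ i ∈ Finset.range (L + 1), (2*p) ^ (n - L + i) := by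
    calc ∑ j ∈ Finset.range (L + 1), (2*p) ^ (n - j)
        = ∑ j ∈ Finset.range (L + 1), (2*p) ^ (n - L + (L + 1 - 1 - j)) := by
          apply Finset.sum_congr rfl
          intro j hj
          simp only [Finset.mem_range] at hj
          congr 1
          omega
      _ = ∑ i ∈ Finset.range (L + 1), (2*p) ^ (n - L + i) :=
          Finset.sum_range_reflect (fun i => (2*p) ^ (n - L + i)) (L + 1)
  rw [h1]
  have h2 : ∑ i ∈ Finset.range (L + 1), (2*p) ^ (n - L + i)
      = (2*p) ^ (n - L) * ∑ i ∈ Finset.range (L + 1), (2*p) ^ i := by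
    rw [Finset.mul_sum]
    apply Finset.sum_congr rfl
    intro i _
    rw [pow_add]
  rw [h2]
  calc (2*p) ^ (n - L) * ∑ i ∈ Finset.range (L + 1), (2*p) ^ i
      ≤ (2*p) ^ (n - L) * (1 + 2 * (2*p)) := by
        apply mul_le_mul_of_nonneg_left (geom_bound (by linarith) (by linarith) _) (by positivity)
    _ = (1 + 4*p) * (2*p) ^ (n - L) := by ring

lemma sum_by_length {n : ℕ} (g : ℕ → ℝ) :
    ∑ v ∈ Finset.univ.filter (fun v : Vtx n => v.1.length < n), g v.1.length
      = ∑ L ∈ Finset.range n, (2:ℝ)^L * g L := by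
  rw [← Finset.sum_fiberwise_of_maps_to (g := fun v : Vtx n => v.1.length)
    (t := Finset.range n)
    (fun v hv => Finset.mem_range.mpr (by simpa using (Finset.mem_filter.mp hv).2))
    (fun v : Vtx n => g v.1.length)]
  apply Finset.sum_congr rfl
  intro L hL
  rw [Finset.mem_range] at hL
  have hfe : (Finset.univ.filter (fun v : Vtx n => v.1.length < n)).filter
      (fun v => v.1.length = L) = Finset.univ.filter (fun v : Vtx n => v.1.length = L) := by
    ext v
    simp only [Finset.mem_filter, Finset.mem_univ, true_and]
    constructor
    · rintro ⟨h1, h2⟩; exact h2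
    · intro h; exact ⟨by omega, h⟩
  rw [hfe]
  have : ∑ v ∈ Finset.univ.filter (fun v : Vtx n => v.1.length = L), g v.1.length
      = ∑ v ∈ Finset.univ.filter (fun v : Vtx n => v.1.length = L), g L := by
    apply Finset.sum_congr rfl
    intro v hv
    rw [(Finset.mem_filter.mp hv).2]
  rw [this, Finset.sum_const, card_length_eq hL.le, nsmul_eq_mul]
  push_cast
  ring

lemma total_upper {n : ℕ} {p : ℝ} (hp0 : 0 ≤ p) (hp4 : p ≤ 1/4) :
    ∑ v ∈ Finset.univ.filter (fun v : Vtx n => v.1.length < n),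
      (∑ j ∈ Finset.range (v.1.length + 1), (2*p) ^ (n - j))
      ≤ 2^n * p * ((1 + 4*p) * (1 + 2*p)) := by
  have step1 : ∑ v ∈ Finset.univ.filter (fun v : Vtx n => v.1.length < n),
      (∑ j ∈ Finset.range (v.1.length + 1), (2*p) ^ (n - j))
      ≤ ∑ v ∈ Finset.univ.filter (fun v : Vtx n => v.1.length < n),
          (1 + 4*p) * (2*p) ^ (n - v.1.length) := by
    apply Finset.sum_le_sum
    intro v hv
    exact inner_bound hp0 hp4 (by simpa using (Finset.mem_filter.mp hv).2)
  refine step1.trans ?_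
  rw [sum_by_length (fun L => (1 + 4*p) * (2*p) ^ (n - L))]
  have step3 : ∑ L ∈ Finset.range n, (2:ℝ)^L * ((1 + 4*p) * (2*p) ^ (n - L))
      = (1 + 4*p) * 2^n * ∑ L ∈ Finset.range n, p ^ (n - L) := by
    rw [Finset.mul_sum]
    apply Finset.sum_congr rfl
    intro L hL
    rw [Finset.mem_range] at hL
    have h2 : (2:ℝ)^L * (2:ℝ)^(n-L) = 2^n := by
      rw [← pow_add]
      congr 1
      omega
    calc (2:ℝ)^L * ((1 + 4*p) * (2*p) ^ (n - L))
        = (1 + 4*p) * ((2:ℝ)^L * (2:ℝ)^(n-L) * p^(n-L)) := by rw [mul_pow]; ring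
      _ = (1 + 4*p) * 2^n * p^(n-L) := by rw [h2]; ring
  rw [step3]
  have step4 : ∑ L ∈ Finset.range n, (p:ℝ) ^ (n - L) = p * ∑ i ∈ Finset.range n, p ^ i := by
    calc ∑ L ∈ Finset.range n, (p:ℝ) ^ (n - L)
        = ∑ L ∈ Finset.range n, (fun i => p ^ (i+1)) (n - 1 - L) := by
          apply Finset.sum_congr rfl
          intro L hL
          simp only [Finset.mem_range] at hL
          congr 1
          omega
      _ = ∑ i ∈ Finset.range n, p ^ (i+1) := by
          simpa using Finset.sum_range_reflect (fun i => p ^ (i+1)) n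
      _ = p * ∑ i ∈ Finset.range n, p ^ i := by
          rw [Finset.mul_sum]
          apply Finset.sum_congr rfl
          intro i _
          rw [pow_succ]
          ring
  rw [step4]
  calc (1 + 4*p) * 2^n * (p * ∑ i ∈ Finset.range n, p ^ i)
      ≤ (1 + 4*p) * 2^n * (p * (1 + 2*p)) := by
        apply mul_le_mul_of_nonneg_left _ (by positivity)
        exact mul_le_mul_of_nonneg_left (geom_bound hp0 (by linarith) n) hp0
    _ = 2^n * p * ((1 + 4*p) * (1 + 2*p)) := by ring

lemma master {n : ℕ} {p : ℝ} (hp0 : 0 < p) (hp1 : p < 1) (hp4 : p ≤ 1/4) (hn : 1 ≤ n) :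
    (2^n * p * (1 - p/2) ≤ ∫ ω, (downClusterSize n ω : ℝ) ∂(treeMeasure n p)
      ∧ (∫ ω, (downClusterSize n ω : ℝ) ∂(treeMeasure n p)) ≤ 2^n * p * ((1+4*p)*(1+2*p)))
    ∧ (2^n * p * (1 - p/2) ≤ ∫ ω, (clusterSize n ω : ℝ) ∂(treeMeasure n p)
      ∧ (∫ ω, (clusterSize n ω : ℝ) ∂(treeMeasure n p)) ≤ 2^n * p * ((1+4*p)*(1+2*p))) := by
  haveI := treeMeasure_prob n hp0.le hp1.le
  have hEY : (∫ ω, (downClusterSize n ω : ℝ) ∂(treeMeasure n p))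
      = ∑ v ∈ Finset.univ.filter (fun v : Vtx n => v.1.length < n),
          ((treeMeasure n p) (Ydown v)).toReal := integral_count hp0.le hp1.le Ydown
  have hEX : (∫ ω, (clusterSize n ω : ℝ) ∂(treeMeasure n p))
      = ∑ v ∈ Finset.univ.filter (fun v : Vtx n => v.1.length < n),
          ((treeMeasure n p) (Xwet v)).toReal := integral_count hp0.le hp1.le Xwet
  have hYX : ∑ v ∈ Finset.univ.filter (fun v : Vtx n => v.1.length < n),
        ((treeMeasure n p) (Ydown v)).toReal
      ≤ ∑ v ∈ Finset.univ.filter (fun v : Vtx n => v.1.length < n),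
        ((treeMeasure n p) (Xwet v)).toReal := by
    apply Finset.sum_le_sum
    intro v _
    exact ENNReal.toReal_mono (measure_ne_top _ _) (measure_mono (Ydown_subset_Xwet v))
  have hlow : 2^n * p * (1 - p/2)
      ≤ ∑ v ∈ Finset.univ.filter (fun v : Vtx n => v.1.length < n),
          ((treeMeasure n p) (Ydown v)).toReal := by
    have heq : (2:ℝ)^n * p * (1 - p/2) = 2^(n-1) * (p * (2 - p)) := by
      have h2 : (2:ℝ)^n = 2 * 2^(n-1) := by
        rw [← pow_succ']
        congr 1
        omega
      rw [h2]
      ring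
    rw [heq]
    calc (2:ℝ)^(n-1) * (p * (2 - p))
        = ∑ _v ∈ Finset.univ.filter (fun v : Vtx n => v.1.length = n - 1), (p * (2 - p)) := by
          rw [Finset.sum_const, card_length_eq (by omega), nsmul_eq_mul]
          push_cast
          ring
      _ ≤ ∑ v ∈ Finset.univ.filter (fun v : Vtx n => v.1.length = n - 1),
            ((treeMeasure n p) (Ydown v)).toReal := by
          apply Finset.sum_le_sum
          intro v hv
          have hv' : v.1.length = n - 1 := by simpa using (Finset.mem_filter.mp hv).2
          exact measure_Ydown_ge hp0.le hp1.le v (by omega)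
      _ ≤ ∑ v ∈ Finset.univ.filter (fun v : Vtx n => v.1.length < n),
            ((treeMeasure n p) (Ydown v)).toReal := by
          apply Finset.sum_le_sum_of_subset_of_nonneg
          · intro v hv
            simp only [Finset.mem_filter, Finset.mem_univ, true_and] at hv ⊢
            omega
          · intro v _ _
            exact ENNReal.toReal_nonneg
  have hup : ∑ v ∈ Finset.univ.filter (fun v : Vtx n => v.1.length < n),
        ((treeMeasure n p) (Xwet v)).toReal ≤ 2^n * p * ((1+4*p)*(1+2*p)) := by
    calc ∑ v ∈ Finset.univ.filter (fun v : Vtx n => v.1.length < n),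
          ((treeMeasure n p) (Xwet v)).toReal
        ≤ ∑ v ∈ Finset.univ.filter (fun v : Vtx n => v.1.length < n),
            (∑ j ∈ Finset.range (v.1.length + 1), (2*p) ^ (n - j)) :=
          Finset.sum_le_sum fun v _ => measure_Xwet_le hp0.le hp1.le v
      _ ≤ 2^n * p * ((1+4*p)*(1+2*p)) := total_upper hp0.le hp4
  refine ⟨⟨?_, ?_⟩, ?_, ?_⟩
  · rw [hEY]; exact hlow
  · rw [hEY]; exact hYX.trans hup
  · rw [hEX]; exact hlow.trans hYX
  · rw [hEX]; exact hup

end Algebra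


lemma squeeze_key (pn : ℕ → ℝ)
    (hp0 : ∀ n, 0 < pn n) (hp1 : ∀ n, pn n < 1)
    (hlim : Filter.Tendsto pn Filter.atTop (nhds 0))
    (I : ℕ → ℝ)
    (hI : ∀ n, 1 ≤ n → pn n ≤ 1/4 →
      2^n * pn n * (1 - pn n/2) ≤ I n ∧ I n ≤ 2^n * pn n * ((1+4*pn n)*(1+2*pn n))) :
    Filter.Tendsto (fun n => I n / (2 ^ n * pn n)) Filter.atTop (nhds 1) := by
  have hev : ∀ᶠ n in Filter.atTop, pn n ≤ 1/4 :=
    hlim.eventually (eventually_le_nhds (by norm_num))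
  have hev1 : ∀ᶠ n in Filter.atTop, 1 ≤ n := Filter.eventually_ge_atTop 1
  apply tendsto_of_tendsto_of_tendsto_of_le_of_le'
    (g := fun n => 1 - pn n / 2) (h := fun n => (1 + 4 * pn n) * (1 + 2 * pn n))
  · have : Filter.Tendsto (fun n => 1 - pn n / 2) Filter.atTop (nhds (1 - 0 / 2)) :=
      tendsto_const_nhds.sub (hlim.div_const 2)
    simpa using this
  · have : Filter.Tendsto (fun n => (1 + 4 * pn n) * (1 + 2 * pn n)) Filter.atTop
        (nhds ((1 + 4 * 0) * (1 + 2 * 0))) :=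
      (tendsto_const_nhds.add (hlim.const_mul 4)).mul
        (tendsto_const_nhds.add (hlim.const_mul 2))
    simpa using this
  · filter_upwards [hev, hev1] with n h4 h1
    have hD : (0:ℝ) < 2 ^ n * pn n := by
      have := hp0 n
      positivity
    rw [le_div_iff₀ hD]
    calc (1 - pn n / 2) * (2 ^ n * pn n) = 2 ^ n * pn n * (1 - pn n / 2) := by ring
      _ ≤ I n := (hI n h1 h4).1
  · filter_upwards [hev, hev1] with n h4 h1
    have hD : (0:ℝ) < 2 ^ n * pn n := by
      have := hp0 n
      positivity
    rw [div_le_iff₀ hD]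
    calc I n ≤ 2 ^ n * pn n * ((1 + 4 * pn n) * (1 + 2 * pn n)) := (hI n h1 h4).2
      _ = (1 + 4 * pn n) * (1 + 2 * pn n) * (2 ^ n * pn n) := by ring


/-- **Expected cluster sizes in the badly subcritical regime.**
If `p_n → 0` then `E[|C_n|] ∼ E[|C↓_n|] ∼ 2^n p_n`. -/
theorem expected_cluster_asymptotics (pn : ℕ → ℝ)
    (hp0 : ∀ n, 0 < pn n) (hp1 : ∀ n, pn n < 1)
    (hlim : Filter.Tendsto pn Filter.atTop (nhds 0)) :
    Filter.Tendsto
      (fun n => (∫ ω, (clusterSize n ω : ℝ) ∂(treeMeasure n (pn n))) /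
        (2 ^ n * pn n)) Filter.atTop (nhds 1) ∧
    Filter.Tendsto
      (fun n => (∫ ω, (downClusterSize n ω : ℝ) ∂(treeMeasure n (pn n))) /
        (2 ^ n * pn n)) Filter.atTop (nhds 1) := by
  constructor
  · exact squeeze_key pn hp0 hp1 hlim _
      (fun n hn h4 => (master (hp0 n) (hp1 n) h4 hn).2)
  · exact squeeze_key pn hp0 hp1 hlim _
      (fun n hn h4 => (master (hp0 n) (hp1 n) h4 hn).1)
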